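/- Fix 0 ≤ k ≤ n−1 and channels W, W̃ with d(W,W̃) ≤ ε. With the hybrid distributions P_{UV Y₁^{k+1} Ỹ_{k+2}ⁿ} and P_{UV Y₁ᵏ Ỹ_{k+1}ⁿ} as defined from a stochastic encoder E and Markov chain U—V—Xⁿ, the difference of conditional mutual informations satisfies |I(V; Y₁^{k+1} Ỹ_{k+2}ⁿ | U) − I(V; Y₁ᵏ Ỹ_{k+1}ⁿ | U)| ≤ 4ε log|𝒴| + 4H₂(ε). -/

import Mathlib

open Finset Real

noncomputable def H2 (e : ℝ) : ℝ := -(e * Real.logb 2 e) - (1 - e) * Real.logb 2 (1 - e)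

def IsPMF {α : Type*} [Fintype α] (p : α → ℝ) : Prop :=
  (∀ a, 0 ≤ p a) ∧ ∑ a, p a = 1

noncomputable def ent {α : Type*} [Fintype α] (p : α → ℝ) : ℝ :=
  -∑ a, p a * Real.logb 2 (p a)

/-- Conditional mutual information `I(B ; C | A)` for a joint distribution on `α × β × γ`. -/
noncomputable def condMI {α β γ : Type*} [Fintype α] [Fintype β] [Fintype γ]
    (p : α × β × γ → ℝ) : ℝ :=
  ent (fun x : α × β => ∑ c, p (x.1, x.2, c)) + ent (fun x : α × γ => ∑ b, p (x.1, b, x.2))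
    - ent p - ent (fun a => ∑ b, ∑ c, p (a, b, c))

lemma ent_eq {α : Type*} [Fintype α] (p : α → ℝ) :
    ent p = (∑ a, Real.negMulLog (p a)) / Real.log 2 := by
  have h : ∀ a, p a * Real.logb 2 (p a) = -(Real.negMulLog (p a) / Real.log 2) := by
    intro a; simp [Real.negMulLog, Real.logb]; ring
  unfold ent
  rw [Finset.sum_congr rfl fun a _ => h a, Finset.sum_neg_distrib, neg_neg, Finset.sum_div]

lemma H2_eq (e : ℝ) : H2 e = (Real.negMulLog e + Real.negMulLog (1 - e)) / Real.log 2 := by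
  unfold H2 Real.logb Real.negMulLog; ring

-- subadditivity of negMulLog
lemma negMulLog_add_le {s d : ℝ} (hs : 0 ≤ s) (hd : 0 ≤ d) :
    Real.negMulLog (s + d) ≤ Real.negMulLog s + Real.negMulLog d := by
  rcases eq_or_lt_of_le hs with rfl | hs'
  · simp
  rcases eq_or_lt_of_le hd with rfl | hd'
  · simp
  have h1 : Real.log s ≤ Real.log (s + d) := Real.log_le_log hs' (by linarith)
  have h2 : Real.log d ≤ Real.log (s + d) := Real.log_le_log hd' (by linarith)
  simp only [Real.negMulLog]
  nlinarith

-- decreasing increments: negMulLog s - negMulLog (s+d) ≤ negMulLog (1-d)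
lemma negMulLog_sub_le {s d : ℝ} (hs : 0 ≤ s) (hd : 0 ≤ d) (hsd : s + d ≤ 1) :
    Real.negMulLog s - Real.negMulLog (s + d) ≤ Real.negMulLog (1 - d) := by
  rcases eq_or_lt_of_le hd with rfl | hd'
  · simp [Real.negMulLog_nonneg (by linarith) (by linarith)]
  set g : ℝ → ℝ := fun x => Real.negMulLog (x + d) - Real.negMulLog x with hg
  have key : AntitoneOn g (Set.Icc 0 (1 - d)) := by
    apply antitoneOn_of_deriv_nonpos (convex_Icc _ _)
    · exact (Real.continuous_negMulLog.comp (continuous_id.add continuous_const)).sub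
        Real.continuous_negMulLog |>.continuousOn
    · rw [interior_Icc]
      intro x hx
      have hx1 := hx.1
      have hx0 : x ≠ 0 := ne_of_gt hx1
      have hxd : x + d ≠ 0 := by nlinarith
      exact (((Real.hasDerivAt_negMulLog hxd).comp x
        ((hasDerivAt_id x).add_const d)).sub (Real.hasDerivAt_negMulLog hx0)).differentiableAt
        |>.differentiableWithinAt
    · rw [interior_Icc]
      intro x hx
      have hx0 : x ≠ 0 := ne_of_gt hx.1
      have hxd : (0:ℝ) < x + d := by linarith [hx.1]
      have hder : HasDerivAt g ((-Real.log (x + d) - 1) * 1 - (-Real.log x - 1)) x := by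
        have := (((Real.hasDerivAt_negMulLog (ne_of_gt hxd)).comp x
          ((hasDerivAt_id x).add_const d)).sub (Real.hasDerivAt_negMulLog hx0))
        exact this
      rw [hder.deriv]
      have : Real.log x ≤ Real.log (x + d) := Real.log_le_log hx.1 (by linarith)
      linarith
  have h1 : g (1 - d) ≤ g s :=
    key ⟨hs, by linarith⟩ ⟨by linarith, le_refl _⟩ (by linarith)
  simp only [hg] at h1
  have he : 1 - d + d = (1:ℝ) := by ring
  rw [he, Real.negMulLog_one] at h1
  linarith

-- negMulLog (1-d) ≤ negMulLog d for d ≤ 1/2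
lemma negMulLog_one_sub_le {d : ℝ} (hd : 0 ≤ d) (hd2 : d ≤ 1/2) :
    Real.negMulLog (1 - d) ≤ Real.negMulLog d := by
  set h : ℝ → ℝ := fun x => Real.negMulLog x - Real.negMulLog (1 - x) with hh
  have hcon : ConcaveOn ℝ (Set.Icc (0:ℝ) (1/2)) h := by
    apply concaveOn_of_hasDerivWithinAt2_nonpos (f' := fun x => -Real.log x - Real.log (1-x) - 2)
      (f'' := fun x => -x⁻¹ + (1-x)⁻¹) (convex_Icc _ _)
    · exact (Real.continuous_negMulLog.sub
        (Real.continuous_negMulLog.comp (continuous_const.sub continuous_id))).continuousOn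
    · rw [interior_Icc]
      intro x hx
      obtain ⟨hx1, hx2⟩ := hx
      have hne : x ≠ 0 := ne_of_gt hx1
      have hne2 : (1:ℝ) - x ≠ 0 := by intro hc; rw [sub_eq_zero] at hc; rw [← hc] at hx2; norm_num at hx2
      have d1 : HasDerivAt (fun x : ℝ => Real.negMulLog (1 - x))
          ((-Real.log (1-x) - 1) * (-1)) x :=
        (Real.hasDerivAt_negMulLog hne2).comp x ((hasDerivAt_id x).const_sub 1)
      have d2 : HasDerivAt h ((-Real.log x - 1) - (-Real.log (1-x) - 1) * (-1)) x :=
        (Real.hasDerivAt_negMulLog hne).sub d1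
      have : (-Real.log x - 1) - (-Real.log (1-x) - 1) * (-1)
          = -Real.log x - Real.log (1-x) - 2 := by ring
      rw [this] at d2
      exact d2.hasDerivWithinAt
    · rw [interior_Icc]
      intro x hx
      obtain ⟨hx1, hx2⟩ := hx
      have hne : x ≠ 0 := ne_of_gt hx1
      have hne2 : (1:ℝ) - x ≠ 0 := by intro hc; rw [sub_eq_zero] at hc; rw [← hc] at hx2; norm_num at hx2
      have d1 : HasDerivAt (fun x : ℝ => Real.log (1 - x)) ((1-x)⁻¹ * (-1)) x :=
        (Real.hasDerivAt_log hne2).comp x ((hasDerivAt_id x).const_sub 1)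
      have d2 : HasDerivAt (fun x : ℝ => -Real.log x - Real.log (1-x) - 2)
          (-x⁻¹ - (1-x)⁻¹ * (-1)) x :=
        (((Real.hasDerivAt_log hne).neg).sub d1).sub_const 2
      have : -x⁻¹ - (1-x)⁻¹ * (-1) = -x⁻¹ + (1-x)⁻¹ := by ring
      rw [this] at d2
      exact d2.hasDerivWithinAt
    · rw [interior_Icc]
      intro x hx
      obtain ⟨hx1, hx2⟩ := hx
      have hxi : (0:ℝ) < x⁻¹ := by positivity
      have h1x : (0:ℝ) < 1 - x := by linarith
      have key : (1-x)⁻¹ ≤ x⁻¹ := by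
        apply inv_anti₀ hx1; linarith
      linarith
  have hmem0 : (0:ℝ) ∈ Set.Icc (0:ℝ) (1/2) := by norm_num
  have hmem1 : (1/2:ℝ) ∈ Set.Icc (0:ℝ) (1/2) := by norm_num
  have hw1 : (0:ℝ) ≤ 1 - 2*d := by linarith
  have hw2 : (0:ℝ) ≤ 2*d := by linarith
  have hcomb := hcon.2 hmem0 hmem1 hw1 hw2 (by ring)
  have heq : (1 - 2*d) • (0:ℝ) + (2*d) • (1/2:ℝ) = d := by
    simp [smul_eq_mul]; ring
  rw [heq] at hcomb
  have h0 : h 0 = 0 := by simp [hh]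
  have h12 : h (1/2) = 0 := by norm_num [hh]
  rw [h0, h12] at hcomb
  simp only [smul_eq_mul, mul_zero, add_zero] at hcomb
  have : h d = Real.negMulLog d - Real.negMulLog (1 - d) := by simp [hh]
  linarith [hcomb, this.symm.le, this.le]

-- |negMulLog s - negMulLog t| ≤ negMulLog |s - t| for s,t ∈ [0,1], |s-t| ≤ 1/2
lemma abs_negMulLog_sub_le {s t : ℝ} (hs : 0 ≤ s) (hs1 : s ≤ 1) (ht : 0 ≤ t) (ht1 : t ≤ 1)
    (hst : |s - t| ≤ 1/2) :
    |Real.negMulLog s - Real.negMulLog t| ≤ Real.negMulLog |s - t| := by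
  wlog h : s ≤ t generalizing s t
  · rw [abs_sub_comm, abs_sub_comm s t]
    exact this ht ht1 hs hs1 (by rwa [abs_sub_comm]) (le_of_not_ge h)
  have hd : |s - t| = t - s := by rw [abs_sub_comm]; exact abs_of_nonneg (by linarith)
  rw [hd] at hst ⊢
  set d := t - s with hdd
  have hd0 : 0 ≤ d := by linarith
  rw [abs_le]
  constructor
  · -- -negMulLog d ≤ negMulLog s - negMulLog t : subadditivity
    have h1 := negMulLog_add_le hs hd0
    have hst' : s + d = t := by simp [hdd]
    rw [hst'] at h1
    linarith
  · -- negMulLog s - negMulLog t ≤ negMulLog d : via sub_le & one_sub_le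
    have h1 := negMulLog_sub_le hs hd0 (by simp [hdd]; linarith)
    have h2 := negMulLog_one_sub_le hd0 hst
    have hst' : s + d = t := by simp [hdd]
    rw [hst'] at h1
    linarith

lemma sum_negMulLog_le {Y : Type*} [Fintype Y] [Nonempty Y] (p : Y → ℝ) (hp : ∀ y, 0 ≤ p y) :
    ∑ y, Real.negMulLog (p y)
      ≤ (Fintype.card Y : ℝ) * Real.negMulLog ((∑ y, p y) / (Fintype.card Y : ℝ)) := by
  have hM : (0:ℝ) < (Fintype.card Y : ℝ) := by
    exact_mod_cast Fintype.card_pos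
  have hj := Real.concaveOn_negMulLog.le_map_sum (t := (Finset.univ : Finset Y))
    (w := fun _ : Y => ((Fintype.card Y : ℝ))⁻¹) (p := p)
    (fun i _ => by positivity)
    (by simp [Finset.sum_const, Finset.card_univ, mul_inv_cancel₀ (ne_of_gt hM)])
    (fun i _ => hp i)
  simp only [smul_eq_mul] at hj
  rw [← Finset.mul_sum, ← Finset.mul_sum] at hj
  calc ∑ y, Real.negMulLog (p y)
      = (Fintype.card Y : ℝ) * ((Fintype.card Y : ℝ)⁻¹ * ∑ y, Real.negMulLog (p y)) := by
        field_simp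
    _ ≤ (Fintype.card Y : ℝ) * Real.negMulLog ((Fintype.card Y : ℝ)⁻¹ * ∑ y, p y) := by
        apply mul_le_mul_of_nonneg_left hj hM.le
    _ = (Fintype.card Y : ℝ) * Real.negMulLog ((∑ y, p y) / (Fintype.card Y : ℝ)) := by
        rw [inv_mul_eq_div]

lemma ent_nonneg {α : Type*} [Fintype α] {p : α → ℝ} (hp : IsPMF p) : 0 ≤ ent p := by
  rw [ent_eq]
  apply div_nonneg _ (Real.log_nonneg one_le_two)
  apply Finset.sum_nonneg
  intro a _
  have h1 : p a ≤ 1 := by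
    rw [← hp.2]
    exact Finset.single_le_sum (fun i _ => hp.1 i) (Finset.mem_univ a)
  exact Real.negMulLog_nonneg (hp.1 a) h1

lemma ent_le_logb {α : Type*} [Fintype α] [Nonempty α] {p : α → ℝ} (hp : IsPMF p) :
    ent p ≤ Real.logb 2 (Fintype.card α) := by
  have hM : (0:ℝ) < (Fintype.card α : ℝ) := by exact_mod_cast Fintype.card_pos
  rw [ent_eq, Real.logb, div_le_div_iff_of_pos_right (Real.log_pos one_lt_two)]
  calc ∑ a, Real.negMulLog (p a)
      ≤ (Fintype.card α : ℝ) * Real.negMulLog ((∑ a, p a) / (Fintype.card α : ℝ)) :=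
        sum_negMulLog_le p hp.1
    _ = Real.log (Fintype.card α) := by
        rw [hp.2]
        simp only [Real.negMulLog, Real.log_div one_ne_zero (ne_of_gt hM)]
        field_simp
        simp

noncomputable def h2e (x : ℝ) : ℝ := Real.negMulLog x + Real.negMulLog (1 - x)

lemma h2e_mono : MonotoneOn h2e (Set.Icc (0:ℝ) (1/2)) := by
  apply monotoneOn_of_deriv_nonneg (convex_Icc _ _)
  · exact (Real.continuous_negMulLog.add
      (Real.continuous_negMulLog.comp (continuous_const.sub continuous_id))).continuousOn
  · rw [interior_Icc]
    intro x hx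
    obtain ⟨hx1, hx2⟩ := hx
    have hne : x ≠ 0 := ne_of_gt hx1
    have hne2 : (1:ℝ) - x ≠ 0 := by nlinarith
    exact ((Real.hasDerivAt_negMulLog hne).add
      (((Real.hasDerivAt_negMulLog hne2).comp x
        ((hasDerivAt_id x).const_sub 1)))).differentiableAt.differentiableWithinAt
  · rw [interior_Icc]
    intro x hx
    obtain ⟨hx1, hx2⟩ := hx
    have hne : x ≠ 0 := ne_of_gt hx1
    have hne2 : (1:ℝ) - x ≠ 0 := by nlinarith
    have d1 : HasDerivAt h2e ((-Real.log x - 1) + (-Real.log (1-x) - 1) * (-1)) x :=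
      (Real.hasDerivAt_negMulLog hne).add
        ((Real.hasDerivAt_negMulLog hne2).comp x ((hasDerivAt_id x).const_sub 1))
    rw [d1.deriv]
    have hlog : Real.log x ≤ Real.log (1 - x) := Real.log_le_log hx1 (by linarith)
    linarith

lemma H2_mono {d e : ℝ} (hd : 0 ≤ d) (hde : d ≤ e) (he : e ≤ 1/2) : H2 d ≤ H2 e := by
  rw [H2_eq, H2_eq]
  have key := h2e_mono ⟨hd, hde.trans he⟩ ⟨hd.trans hde, he⟩ hde
  unfold h2e at key
  have hl := (Real.log_pos one_lt_two)
  gcongr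

lemma h2e_nonneg {e : ℝ} (h0 : 0 ≤ e) (h1 : e ≤ 1) : 0 ≤ h2e e := by
  unfold h2e
  have := Real.negMulLog_nonneg h0 h1
  have := Real.negMulLog_nonneg (by linarith : (0:ℝ) ≤ 1 - e) (by linarith)
  linarith

lemma H2_nonneg {e : ℝ} (h0 : 0 ≤ e) (h1 : e ≤ 1) : 0 ≤ H2 e := by
  rw [H2_eq]
  exact div_nonneg (h2e_nonneg h0 h1) (Real.log_pos one_lt_two).le

lemma fannes {Y : Type*} [Fintype Y] [Nonempty Y] (a b : Y → ℝ) (ha : IsPMF a) (hb : IsPMF b)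
    {ε : ℝ} (hε0 : 0 ≤ ε) (hε2 : ε ≤ 1/2) (hab : ∑ y, |a y - b y| ≤ ε) :
    |ent a - ent b| ≤ ε * Real.logb 2 (Fintype.card Y) + H2 ε := by
  have hM : (0:ℝ) < (Fintype.card Y : ℝ) := by exact_mod_cast Fintype.card_pos
  have hM1 : (1:ℝ) ≤ (Fintype.card Y : ℝ) := by exact_mod_cast Fintype.card_pos
  have hlogM : 0 ≤ Real.log (Fintype.card Y) := Real.log_nonneg hM1
  have hle1 : ∀ (p : Y → ℝ), IsPMF p → ∀ y, p y ≤ 1 := by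
    intro p hp y
    rw [← hp.2]
    exact Finset.single_le_sum (fun i _ => hp.1 i) (Finset.mem_univ y)
  have habs : ∀ y, |a y - b y| ≤ 1/2 := by
    intro y
    calc |a y - b y| ≤ ∑ y', |a y' - b y'| :=
          Finset.single_le_sum (f := fun y' => |a y' - b y'|) (fun i _ => abs_nonneg _)
            (Finset.mem_univ y)
      _ ≤ ε := hab
      _ ≤ 1/2 := hε2
  -- step 1
  have step1 : |∑ y, Real.negMulLog (a y) - ∑ y, Real.negMulLog (b y)|
      ≤ ∑ y, Real.negMulLog |a y - b y| := by
    rw [← Finset.sum_sub_distrib]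
    calc |∑ y, (Real.negMulLog (a y) - Real.negMulLog (b y))|
        ≤ ∑ y, |Real.negMulLog (a y) - Real.negMulLog (b y)| := Finset.abs_sum_le_sum_abs _ _
      _ ≤ ∑ y, Real.negMulLog |a y - b y| := by
          apply Finset.sum_le_sum
          intro y _
          exact abs_negMulLog_sub_le (ha.1 y) (hle1 a ha y) (hb.1 y) (hle1 b hb y) (habs y)
  -- step 2
  set δ := ∑ y, |a y - b y| with hδ
  have hδ0 : 0 ≤ δ := Finset.sum_nonneg fun y _ => abs_nonneg _
  have step2 : ∑ y, Real.negMulLog |a y - b y|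
      ≤ (Fintype.card Y : ℝ) * Real.negMulLog (δ / (Fintype.card Y : ℝ)) :=
    sum_negMulLog_le _ (fun y => abs_nonneg _)
  -- step 3
  have step3 : (Fintype.card Y : ℝ) * Real.negMulLog (δ / (Fintype.card Y : ℝ))
      ≤ ε * Real.log (Fintype.card Y) + h2e ε := by
    rcases eq_or_lt_of_le hδ0 with hδe | hδp
    · rw [← hδe]
      simp only [zero_div, Real.negMulLog_zero, mul_zero]
      have := h2e_nonneg hε0 (by linarith)
      positivity
    · have hδM : δ / (Fintype.card Y : ℝ) ≠ 0 := by positivity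
      have expand : (Fintype.card Y : ℝ) * Real.negMulLog (δ / (Fintype.card Y : ℝ))
          = δ * Real.log (Fintype.card Y) + Real.negMulLog δ := by
        simp only [Real.negMulLog, Real.log_div (ne_of_gt hδp) (ne_of_gt hM)]
        field_simp
        ring
      rw [expand]
      have t1 : δ * Real.log (Fintype.card Y) ≤ ε * Real.log (Fintype.card Y) :=
        mul_le_mul_of_nonneg_right hab hlogM
      have t2 : Real.negMulLog δ ≤ h2e ε := by
        calc Real.negMulLog δ ≤ h2e δ := by
              unfold h2e
              have := Real.negMulLog_nonneg (by linarith : (0:ℝ) ≤ 1 - δ)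
                (by linarith [habs, hab] : 1 - δ ≤ 1)
              linarith
          _ ≤ h2e ε := h2e_mono ⟨hδ0, by linarith [hab]⟩ ⟨hε0, hε2⟩ hab
      linarith
  -- combine
  rw [ent_eq, ent_eq, H2_eq, Real.logb, ← sub_div, abs_div,
    abs_of_pos (Real.log_pos one_lt_two), div_le_iff₀ (Real.log_pos one_lt_two)]
  have final : |∑ y, Real.negMulLog (a y) - ∑ y, Real.negMulLog (b y)|
      ≤ ε * Real.log (Fintype.card Y) + h2e ε := le_trans step1 (le_trans step2 step3)
  calc |∑ y, Real.negMulLog (a y) - ∑ y, Real.negMulLog (b y)|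
      ≤ ε * Real.log (Fintype.card Y) + h2e ε := final
    _ = (ε * (Real.log (Fintype.card Y) / Real.log 2)
        + (Real.negMulLog ε + Real.negMulLog (1-ε)) / Real.log 2) * Real.log 2 := by
        field_simp [ne_of_gt (Real.log_pos one_lt_two)]
        unfold h2e
        ring

lemma ent_comp_equiv {α β : Type*} [Fintype α] [Fintype β] (e : α ≃ β) (p : β → ℝ) :
    ent (p ∘ e) = ent p := by
  unfold ent
  congr 1
  exact Equiv.sum_comp e (fun b => p b * Real.logb 2 (p b))

/-- chain rule for entropy of a product-form distribution -/
lemma ent_prod {Z Y : Type*} [Fintype Z] [Fintype Y] (m : Z → ℝ) (a : Z → Y → ℝ)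
    (ha : ∀ z, ∑ y, a z y = 1) :
    ent (fun zy : Z × Y => m zy.1 * a zy.1 zy.2) = ent m + ∑ z, m z * ent (a z) := by
  unfold ent
  rw [Fintype.sum_prod_type]
  have key : ∀ z y, m z * a z y * Real.logb 2 (m z * a z y)
      = (m z * Real.logb 2 (m z)) * a z y + m z * (a z y * Real.logb 2 (a z y)) := by
    intro z y
    by_cases hmz : m z = 0
    · simp [hmz]
    by_cases hay : a z y = 0
    · simp [hay]
    rw [Real.logb, Real.log_mul hmz hay]
    simp only [Real.logb]
    ring
  have inner : ∀ z, ∑ y, m z * a z y * Real.logb 2 (m z * a z y)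
      = m z * Real.logb 2 (m z) + m z * ∑ y, a z y * Real.logb 2 (a z y) := by
    intro z
    rw [Finset.sum_congr rfl fun y _ => key z y, Finset.sum_add_distrib, ← Finset.mul_sum,
      ← Finset.mul_sum, ha z, mul_one]
  rw [Finset.sum_congr rfl fun z _ => inner z, Finset.sum_add_distrib, neg_add]
  congr 1
  rw [← Finset.sum_neg_distrib]
  exact Finset.sum_congr rfl fun z _ => by ring

lemma ent_diff_le {Z S Y : Type*} [Fintype Z] [Fintype S] [Fintype Y] [Nonempty Y] [Nonempty S]
    (c : Z → S → ℝ) (hc : ∀ z s, 0 ≤ c z s)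
    (w w' : S → Y → ℝ) (hw : ∀ s, IsPMF (w s)) (hw' : ∀ s, IsPMF (w' s))
    (hsum : ∑ z, ∑ s, c z s = 1)
    (ε C : ℝ) (hd : ∀ s, ∑ y, |w s y - w' s y| ≤ ε)
    (hFan : ∀ a b : Y → ℝ, IsPMF a → IsPMF b → (∑ y, |a y - b y|) ≤ ε →
      |ent a - ent b| ≤ C) :
    |ent (fun zy : Z × Y => ∑ s, c zy.1 s * w s zy.2)
      - ent (fun zy : Z × Y => ∑ s, c zy.1 s * w' s zy.2)| ≤ C := by
  classical
  have hMcard : (0:ℝ) < (Fintype.card Y : ℝ) := by exact_mod_cast Fintype.card_pos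
  have huPMF : IsPMF (fun _ : Y => ((Fintype.card Y : ℝ))⁻¹) :=
    ⟨fun _ => by positivity, by
      simp [Finset.sum_const, Finset.card_univ, mul_inv_cancel₀ (ne_of_gt hMcard)]⟩
  have hε0 : 0 ≤ ε :=
    le_trans (Finset.sum_nonneg fun y _ => abs_nonneg _) (hd (Classical.arbitrary S))
  have hC0 : 0 ≤ C := by
    have := hFan _ _ huPMF huPMF (by simp [hε0])
    simpa using le_trans (abs_nonneg _) this
  set m : Z → ℝ := fun z => ∑ s, c z s with hm
  have hm0 : ∀ z, 0 ≤ m z := fun z => Finset.sum_nonneg fun s _ => hc z s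
  have hczero : ∀ z, m z = 0 → ∀ s, c z s = 0 := by
    intro z hz s
    have := (Finset.sum_eq_zero_iff_of_nonneg (fun s _ => hc z s)).1 hz
    exact this s (Finset.mem_univ s)
  set a : Z → Y → ℝ := fun z => if m z = 0 then (fun _ => ((Fintype.card Y : ℝ))⁻¹)
    else fun y => (∑ s, c z s * w s y) / m z with hadef
  set b : Z → Y → ℝ := fun z => if m z = 0 then (fun _ => ((Fintype.card Y : ℝ))⁻¹)
    else fun y => (∑ s, c z s * w' s y) / m z with hbdef
  have key : ∀ (v : S → Y → ℝ) (hv : ∀ s, IsPMF (v s))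
      (av : Z → Y → ℝ), (av = fun z => if m z = 0 then (fun _ => ((Fintype.card Y : ℝ))⁻¹)
        else fun y => (∑ s, c z s * v s y) / m z) →
      (∀ z y, (∑ s, c z s * v s y) = m z * av z y) ∧ (∀ z, IsPMF (av z)) := by
    intro v hv av havdef
    constructor
    · intro z y
      by_cases hz : m z = 0
      · rw [havdef]
        simp only [hz, if_true, mul_comm]
        rw [Finset.sum_eq_zero fun s _ => by rw [hczero z hz s, zero_mul]]
        simp [hz]
      · rw [havdef]
        simp only [hz, if_false]
        field_simp
    · intro z
      by_cases hz : m z = 0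
      · rw [havdef]; simp only [hz, if_true]; exact huPMF
      · rw [havdef]; simp only [hz, if_false]
        constructor
        · intro y
          apply div_nonneg _ (hm0 z)
          exact Finset.sum_nonneg fun s _ => mul_nonneg (hc z s) ((hv s).1 y)
        · rw [← Finset.sum_div]
          rw [Finset.sum_comm]
          rw [Finset.sum_congr rfl fun s (_ : s ∈ univ) => by
            rw [← Finset.mul_sum, (hv s).2, mul_one]]
          exact div_self hz
  obtain ⟨hpa, haPMF⟩ := key w hw a hadef
  obtain ⟨hpb, hbPMF⟩ := key w' hw' b hbdef
  have hsumm : ∑ z, m z = 1 := hsum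
  have enta : ent (fun zy : Z × Y => ∑ s, c zy.1 s * w s zy.2)
      = ent m + ∑ z, m z * ent (a z) := by
    rw [show (fun zy : Z × Y => ∑ s, c zy.1 s * w s zy.2)
        = fun zy : Z × Y => m zy.1 * a zy.1 zy.2 from funext fun zy => hpa zy.1 zy.2]
    exact ent_prod m a fun z => (haPMF z).2
  have entb : ent (fun zy : Z × Y => ∑ s, c zy.1 s * w' s zy.2)
      = ent m + ∑ z, m z * ent (b z) := by
    rw [show (fun zy : Z × Y => ∑ s, c zy.1 s * w' s zy.2)
        = fun zy : Z × Y => m zy.1 * b zy.1 zy.2 from funext fun zy => hpb zy.1 zy.2]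
    exact ent_prod m b fun z => (hbPMF z).2
  rw [enta, entb]
  have hdiff : ∀ z, |ent (a z) - ent (b z)| ≤ C := by
    intro z
    by_cases hz : m z = 0
    · have : a z = b z := by rw [hadef, hbdef]; simp [hz]
      rw [this]
      simpa using hC0
    · apply hFan _ _ (haPMF z) (hbPMF z)
      have hab : ∀ y, |a z y - b z y| = |∑ s, c z s * (w s y - w' s y)| / m z := by
        intro y
        rw [hadef, hbdef]
        simp only [hz, if_false]
        rw [div_sub_div_same, ← Finset.sum_sub_distrib, abs_div,
          abs_of_pos (lt_of_le_of_ne (hm0 z) (Ne.symm hz))]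
        congr 1
        exact congrArg _ (Finset.sum_congr rfl fun s _ => by ring)
      rw [Finset.sum_congr rfl fun y (_ : y ∈ univ) => hab y, ← Finset.sum_div,
        div_le_iff₀ (lt_of_le_of_ne (hm0 z) (Ne.symm hz))]
      calc ∑ y, |∑ s, c z s * (w s y - w' s y)|
          ≤ ∑ y, ∑ s, c z s * |w s y - w' s y| := by
            apply Finset.sum_le_sum
            intro y _
            calc |∑ s, c z s * (w s y - w' s y)| ≤ ∑ s, |c z s * (w s y - w' s y)| :=
                  Finset.abs_sum_le_sum_abs _ _
              _ = ∑ s, c z s * |w s y - w' s y| := Finset.sum_congr rfl fun s _ => by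
                  rw [abs_mul, abs_of_nonneg (hc z s)]
        _ = ∑ s, c z s * ∑ y, |w s y - w' s y| := by
            rw [Finset.sum_comm]
            exact Finset.sum_congr rfl fun s _ => by rw [← Finset.mul_sum]
        _ ≤ ∑ s, c z s * ε := Finset.sum_le_sum fun s _ =>
            mul_le_mul_of_nonneg_left (hd s) (hc z s)
        _ = ε * m z := by rw [← Finset.sum_mul, hm]; ring
  calc |(ent m + ∑ z, m z * ent (a z)) - (ent m + ∑ z, m z * ent (b z))|
      = |∑ z, m z * (ent (a z) - ent (b z))| := by
        congr 1
        rw [Finset.sum_congr rfl fun z (_ : z ∈ univ) => mul_sub (m z) (ent (a z)) (ent (b z)),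
          Finset.sum_sub_distrib]
        ring
    _ ≤ ∑ z, |m z * (ent (a z) - ent (b z))| := Finset.abs_sum_le_sum_abs _ _
    _ ≤ ∑ z, m z * C := by
        apply Finset.sum_le_sum
        intro z _
        rw [abs_mul, abs_of_nonneg (hm0 z)]
        exact mul_le_mul_of_nonneg_left (hdiff z) (hm0 z)
    _ = C := by rw [← Finset.sum_mul, hsumm, one_mul]

lemma sum_pi_prod {ι B : Type*} [Fintype ι] [DecidableEq ι] [Fintype B] (f : ι → B → ℝ) :
    ∑ g : ι → B, ∏ i, f i (g i) = ∏ i, ∑ b, f i b := by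
  rw [Finset.prod_univ_sum]
  rw [Fintype.piFinset_univ]

/-- one hybrid step changes the conditional mutual information by
at most `4ε log|𝒴| + 4H₂(ε)`. -/
theorem hybrid_mutual_information_step
    {X Y U V : Type*} [Fintype X] [Fintype Y] [Fintype U] [Fintype V]
    [Nonempty X] [Nonempty Y] [Nonempty U] [Nonempty V]
    (ε : ℝ) (hε : ε ∈ Set.Ioo (0 : ℝ) 1)
    (W W' : X → Y → ℝ) (hW : ∀ x, IsPMF (W x)) (hW' : ∀ x, IsPMF (W' x))
    (hd : ∀ x, ∑ y, |W x y - W' x y| ≤ ε)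
    (n : ℕ) (PU : U → ℝ) (PVU : U → V → ℝ) (E : V → (Fin n → X) → ℝ)
    (hPU : IsPMF PU) (hPVU : ∀ u, IsPMF (PVU u)) (hE : ∀ v, IsPMF (E v))
    (P : ℕ → U × V × (Fin n → Y) → ℝ)
    (hP : ∀ k, P k = fun t => ∑ x : Fin n → X,
        (∏ i : Fin n, if (i : ℕ) < k then W (x i) (t.2.2 i) else W' (x i) (t.2.2 i))
          * E t.2.1 x * PVU t.1 t.2.1 * PU t.1)
    (k : ℕ) (hk : k + 1 ≤ n) :
    |condMI (P (k + 1)) - condMI (P k)| ≤ 4 * ε * Real.logb 2 (Fintype.card Y) + 4 * H2 ε := by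

  classical
  obtain ⟨hε0, hε1⟩ := hε
  have hkn : k < n := hk
  set κ : Fin n := ⟨k, hkn⟩ with hκ
  set e1 : (Fin n → Y) ≃ Y × ({i : Fin n // i ≠ κ} → Y) := Equiv.funSplitAt κ Y with he1
  set M : ℝ := Real.logb 2 (Fintype.card Y) with hM
  have hcard1 : (1:ℝ) ≤ (Fintype.card Y : ℝ) := by exact_mod_cast Fintype.card_pos
  have hM0 : 0 ≤ M := Real.logb_nonneg one_lt_two hcard1
  have hH20 : 0 ≤ H2 ε := H2_nonneg hε0.le hε1.le
  set C : ℝ := 2 * ε * M + 2 * H2 ε with hC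
  -- the uniform-bound hypothesis for ent_diff_le
  have hFan : ∀ a b : Y → ℝ, IsPMF a → IsPMF b → (∑ y, |a y - b y|) ≤ ε →
      |ent a - ent b| ≤ C := by
    intro a b ha hb hab
    rcases le_or_gt ε (1/2) with hc2 | hc2
    · have h1 := fannes a b ha hb hε0.le hc2 hab
      have h2 : 0 ≤ ε * M := mul_nonneg hε0.le hM0
      rw [hC]
      rw [← hM] at h1
      linarith
    · have e1a := ent_nonneg ha
      have e2a := ent_le_logb ha
      have e1b := ent_nonneg hb
      have e2b := ent_le_logb hb
      have habs : |ent a - ent b| ≤ M := by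
        rw [abs_le, hM]
        constructor <;> [linarith [e2b, e1a]; linarith [e2a, e1b]]
      have : M ≤ 2 * ε * M := by nlinarith
      rw [hC]
      linarith
  -- row sums of the channels are 1
  have hrow : ∀ (b : Prop) [Decidable b] (xx : X),
      (∑ y, if b then W xx y else W' xx y) = 1 := by
    intro b _ xx
    split_ifs
    · exact (hW xx).2
    · exact (hW' xx).2
  -- c1 : the common part
  set c1 : (U × (V × ({i : Fin n // i ≠ κ} → Y))) → (Fin n → X) → ℝ := fun z x =>
    (∏ i : {i : Fin n // i ≠ κ},
      if ((i : Fin n) : ℕ) < k then W (x i) (z.2.2 i) else W' (x i) (z.2.2 i))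
      * E z.2.1 x * PVU z.1 z.2.1 * PU z.1 with hc1def
  have hc1nn : ∀ z x, 0 ≤ c1 z x := by
    intro z x
    apply mul_nonneg (mul_nonneg (mul_nonneg _ ((hE z.2.1).1 x)) ((hPVU z.1).1 z.2.1)) (hPU.1 z.1)
    apply Finset.prod_nonneg
    intro i _
    split_ifs
    · exact (hW (x i)).1 (z.2.2 i)
    · exact (hW' (x i)).1 (z.2.2 i)
  -- the main pointwise identity
  have main1 : ∀ (j : ℕ) (ch0 : X → Y → ℝ),
      (∀ (xx : X) (yy : Y), (if (κ : ℕ) < j then W xx yy else W' xx yy) = ch0 xx yy) →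
      (∀ i : Fin n, i ≠ κ → (((i : ℕ) < j) ↔ ((i : ℕ) < k))) →
      ∀ (u : U) (v : V) (g : {i : Fin n // i ≠ κ} → Y) (yk : Y),
      P j (u, v, e1.symm (yk, g))
        = ∑ x : Fin n → X, c1 (u, (v, g)) x * ch0 (x κ) yk := by
    intro j ch0 hch0 hiff u v g yk
    rw [hP j]
    dsimp only
    apply Finset.sum_congr rfl
    intro x _
    set Y' : Fin n → Y := e1.symm (yk, g) with hY'
    have hY'κ : Y' κ = yk := congrArg Prod.fst (e1.apply_symm_apply (yk, g))
    have hY'ne : ∀ (i : {i : Fin n // i ≠ κ}), Y' i = g i := by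
      intro i
      exact congrFun (congrArg Prod.snd (e1.apply_symm_apply (yk, g))) i
    have hprod : (∏ i : Fin n, if (i : ℕ) < j then W (x i) (Y' i) else W' (x i) (Y' i))
        = ch0 (x κ) yk * ∏ i : {i : Fin n // i ≠ κ},
            (if ((i : Fin n) : ℕ) < k then W (x i) (g i) else W' (x i) (g i)) := by
      rw [← Finset.mul_prod_erase Finset.univ _ (Finset.mem_univ κ)]
      congr 1
      · rw [hY'κ, hch0]
      · rw [Finset.prod_subtype (p := fun i => i ≠ κ) (Finset.univ.erase κ) (fun i => by simp)
          (fun i => if (i : ℕ) < j then W (x i) (Y' i) else W' (x i) (Y' i))]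
        apply Finset.prod_congr rfl
        intro i _
        rw [hY'ne i]
        by_cases hik : ((i : Fin n) : ℕ) < k
        · rw [if_pos ((hiff i i.2).mpr hik), if_pos hik]
        · rw [if_neg (fun hc => hik ((hiff i i.2).mp hc)), if_neg hik]
    rw [hprod, hc1def]
    ring
  have hκk : (κ : ℕ) = k := rfl
  have hcond1 : ∀ (xx : X) (yy : Y), (if (κ : ℕ) < k + 1 then W xx yy else W' xx yy) = W xx yy := by
    intro xx yy; rw [if_pos (by rw [hκk]; omega)]
  have hcond1' : ∀ (xx : X) (yy : Y), (if (κ : ℕ) < k then W xx yy else W' xx yy) = W' xx yy := by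
    intro xx yy; rw [if_neg (by rw [hκk]; omega)]
  have hiff1 : ∀ i : Fin n, i ≠ κ → (((i : ℕ) < k + 1) ↔ ((i : ℕ) < k)) := by
    intro i hi
    have : (i : ℕ) ≠ k := by
      intro hc
      exact hi (Fin.ext (by rw [hc, hκk]))
    omega
  have hiff1' : ∀ i : Fin n, i ≠ κ → (((i : ℕ) < k) ↔ ((i : ℕ) < k)) := fun _ _ => Iff.rfl
  -- total mass of c1
  have Hsum : ∑ u : U, ∑ v : V, ∑ g : ({i : Fin n // i ≠ κ} → Y), ∑ x : Fin n → X,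
      c1 (u, (v, g)) x = 1 := by
    have inner : ∀ (u : U) (v : V),
        (∑ g : ({i : Fin n // i ≠ κ} → Y), ∑ x : Fin n → X, c1 (u, (v, g)) x)
          = PVU u v * PU u := by
      intro u v
      rw [Finset.sum_comm]
      have perx : ∀ x : Fin n → X,
          (∑ g : ({i : Fin n // i ≠ κ} → Y), c1 (u, (v, g)) x)
            = E v x * (PVU u v * PU u) := by
        intro x
        rw [hc1def]
        dsimp only
        have hre : ∀ g : ({i : Fin n // i ≠ κ} → Y),
            (∏ i : {i : Fin n // i ≠ κ},
              if ((i : Fin n) : ℕ) < k then W (x i) (g i) else W' (x i) (g i))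
              * E v x * PVU u v * PU u
            = (∏ i : {i : Fin n // i ≠ κ},
              if ((i : Fin n) : ℕ) < k then W (x i) (g i) else W' (x i) (g i))
              * (E v x * (PVU u v * PU u)) := fun g => by ring
        have hprod1 : (∏ i : {i : Fin n // i ≠ κ},
            ∑ b : Y, if ((i : Fin n) : ℕ) < k then W (x i) b else W' (x i) b) = 1 := by
          apply Finset.prod_eq_one
          intro i _
          exact hrow _ (x i)
        rw [Finset.sum_congr rfl fun g _ => hre g, ← Finset.sum_mul,
          sum_pi_prod (fun (i : {i : Fin n // i ≠ κ}) (b : Y) =>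
            if ((i : Fin n) : ℕ) < k then W (x i) b else W' (x i) b),
          hprod1, one_mul]
      rw [Finset.sum_congr rfl fun x _ => perx x, ← Finset.sum_mul, (hE v).2, one_mul]
    rw [Finset.sum_congr rfl fun u (_ : u ∈ univ) => Finset.sum_congr rfl
      fun v (_ : v ∈ univ) => inner u v]
    rw [Finset.sum_congr rfl fun u (_ : u ∈ univ) => by
      rw [← Finset.sum_mul, (hPVU u).2, one_mul]]
    exact hPU.2
  have hsum1 : ∑ z : U × (V × ({i : Fin n // i ≠ κ} → Y)), ∑ x : Fin n → X, c1 z x = 1 := by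
    rw [Fintype.sum_prod_type]
    rw [Finset.sum_congr rfl fun u (_ : u ∈ univ) => Fintype.sum_prod_type
      (f := fun vg : V × ({i : Fin n // i ≠ κ} → Y) => ∑ x : Fin n → X, c1 (u, vg) x)]
    exact Hsum
  -- c2 for the U-Y marginal
  set c2 : (U × ({i : Fin n // i ≠ κ} → Y)) → (V × (Fin n → X)) → ℝ :=
    fun z s => c1 (z.1, (s.1, z.2)) s.2 with hc2def
  have hc2nn : ∀ z s, 0 ≤ c2 z s := fun z s => hc1nn _ _
  have hsum2 : ∑ z : U × ({i : Fin n // i ≠ κ} → Y), ∑ s : V × (Fin n → X), c2 z s = 1 := by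
    rw [Fintype.sum_prod_type]
    rw [Finset.sum_congr rfl fun u (_ : u ∈ univ) => Finset.sum_congr rfl
      fun g (_ : g ∈ univ) => Fintype.sum_prod_type
        (f := fun s : V × (Fin n → X) => c2 (u, g) s)]
    rw [Finset.sum_congr rfl fun u (_ : u ∈ univ) => Finset.sum_comm]
    exact Hsum
  -- equivalences
  set e_full : (U × V × (Fin n → Y)) ≃ ((U × (V × ({i : Fin n // i ≠ κ} → Y))) × Y) :=
    (((Equiv.refl U).prodCongr ((Equiv.refl V).prodCongr e1)).trans
      (((Equiv.refl U).prodCongr (((Equiv.refl V).prodCongr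
          (Equiv.prodComm Y ({i : Fin n // i ≠ κ} → Y))).trans
        (Equiv.prodAssoc V ({i : Fin n // i ≠ κ} → Y) Y).symm)).trans
        (Equiv.prodAssoc U (V × ({i : Fin n // i ≠ κ} → Y)) Y).symm)) with he_full
  set e_uy : (U × (Fin n → Y)) ≃ ((U × ({i : Fin n // i ≠ κ} → Y)) × Y) :=
    ((Equiv.refl U).prodCongr e1).trans
      ((((Equiv.refl U).prodCongr (Equiv.prodComm Y ({i : Fin n // i ≠ κ} → Y))).trans
        (Equiv.prodAssoc U ({i : Fin n // i ≠ κ} → Y) Y).symm)) with he_uy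
  -- transported identities
  set w1 : (Fin n → X) → Y → ℝ := fun x => W (x κ) with hw1
  set w1' : (Fin n → X) → Y → ℝ := fun x => W' (x κ) with hw1'
  have hq1 : P (k+1) ∘ e_full.symm
      = fun zy : (U × (V × ({i : Fin n // i ≠ κ} → Y))) × Y =>
          ∑ x : Fin n → X, c1 zy.1 x * w1 x zy.2 := by
    funext zy
    obtain ⟨⟨u, v, g⟩, yk⟩ := zy
    show P (k+1) (e_full.symm ((u, (v, g)), yk)) = _
    rw [show e_full.symm ((u, (v, g)), yk) = (u, v, e1.symm (yk, g)) from rfl]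
    exact main1 (k+1) W hcond1 hiff1 u v g yk
  have hq1' : P k ∘ e_full.symm
      = fun zy : (U × (V × ({i : Fin n // i ≠ κ} → Y))) × Y =>
          ∑ x : Fin n → X, c1 zy.1 x * w1' x zy.2 := by
    funext zy
    obtain ⟨⟨u, v, g⟩, yk⟩ := zy
    show P k (e_full.symm ((u, (v, g)), yk)) = _
    rw [show e_full.symm ((u, (v, g)), yk) = (u, v, e1.symm (yk, g)) from rfl]
    exact main1 k W' hcond1' hiff1' u v g yk
  have hPdiff : |ent (P (k+1)) - ent (P k)| ≤ C := by
    rw [← ent_comp_equiv e_full.symm (P (k+1)), ← ent_comp_equiv e_full.symm (P k), hq1, hq1']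
    exact ent_diff_le c1 hc1nn w1 w1' (fun x => hW (x κ)) (fun x => hW' (x κ)) hsum1 ε C
      (fun x => hd (x κ)) hFan
  -- U-Y marginal identities
  set w2 : (V × (Fin n → X)) → Y → ℝ := fun s => W (s.2 κ) with hw2
  set w2' : (V × (Fin n → X)) → Y → ℝ := fun s => W' (s.2 κ) with hw2'
  have hq2 : (fun t : U × (Fin n → Y) => ∑ b, P (k+1) (t.1, b, t.2)) ∘ e_uy.symm
      = fun zy : (U × ({i : Fin n // i ≠ κ} → Y)) × Y =>
          ∑ s : V × (Fin n → X), c2 zy.1 s * w2 s zy.2 := by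
    funext zy
    obtain ⟨⟨u, g⟩, yk⟩ := zy
    show (∑ b, P (k+1) ((e_uy.symm ((u, g), yk)).1, b, (e_uy.symm ((u, g), yk)).2)) = _
    rw [show e_uy.symm ((u, g), yk) = (u, e1.symm (yk, g)) from rfl]
    calc ∑ v, P (k+1) (u, v, e1.symm (yk, g))
        = ∑ v, ∑ x : Fin n → X, c1 (u, (v, g)) x * W (x κ) yk :=
          Finset.sum_congr rfl fun v _ => main1 (k+1) W hcond1 hiff1 u v g yk
      _ = ∑ s : V × (Fin n → X), c2 (u, g) s * w2 s yk := by
          rw [Fintype.sum_prod_type]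
  have hq2' : (fun t : U × (Fin n → Y) => ∑ b, P k (t.1, b, t.2)) ∘ e_uy.symm
      = fun zy : (U × ({i : Fin n // i ≠ κ} → Y)) × Y =>
          ∑ s : V × (Fin n → X), c2 zy.1 s * w2' s zy.2 := by
    funext zy
    obtain ⟨⟨u, g⟩, yk⟩ := zy
    show (∑ b, P k ((e_uy.symm ((u, g), yk)).1, b, (e_uy.symm ((u, g), yk)).2)) = _
    rw [show e_uy.symm ((u, g), yk) = (u, e1.symm (yk, g)) from rfl]
    calc ∑ v, P k (u, v, e1.symm (yk, g))
        = ∑ v, ∑ x : Fin n → X, c1 (u, (v, g)) x * W' (x κ) yk :=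
          Finset.sum_congr rfl fun v _ => main1 k W' hcond1' hiff1' u v g yk
      _ = ∑ s : V × (Fin n → X), c2 (u, g) s * w2' s yk := by
          rw [Fintype.sum_prod_type]
  have hUYdiff : |ent (fun t : U × (Fin n → Y) => ∑ b, P (k+1) (t.1, b, t.2))
      - ent (fun t : U × (Fin n → Y) => ∑ b, P k (t.1, b, t.2))| ≤ C := by
    rw [← ent_comp_equiv e_uy.symm (fun t : U × (Fin n → Y) => ∑ b, P (k+1) (t.1, b, t.2)),
      ← ent_comp_equiv e_uy.symm (fun t : U × (Fin n → Y) => ∑ b, P k (t.1, b, t.2)),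
      hq2, hq2']
    exact ent_diff_le c2 hc2nn w2 w2' (fun s => hW (s.2 κ)) (fun s => hW' (s.2 κ)) hsum2 ε C
      (fun s => hd (s.2 κ)) hFan
  -- equal marginals on U × V and U
  have F1 : ∀ j : ℕ, (fun uv : U × V => ∑ y : Fin n → Y, P j (uv.1, uv.2, y))
      = fun uv : U × V => PVU uv.1 uv.2 * PU uv.1 := by
    intro j
    funext uv
    rw [hP j]
    dsimp only
    rw [Finset.sum_comm]
    have perx : ∀ x : Fin n → X,
        (∑ y : Fin n → Y, (∏ i : Fin n, if (i : ℕ) < j then W (x i) (y i) else W' (x i) (y i))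
          * E uv.2 x * PVU uv.1 uv.2 * PU uv.1)
        = E uv.2 x * (PVU uv.1 uv.2 * PU uv.1) := by
      intro x
      have hre : ∀ y : Fin n → Y,
          (∏ i : Fin n, if (i : ℕ) < j then W (x i) (y i) else W' (x i) (y i))
            * E uv.2 x * PVU uv.1 uv.2 * PU uv.1
          = (∏ i : Fin n, if (i : ℕ) < j then W (x i) (y i) else W' (x i) (y i))
            * (E uv.2 x * (PVU uv.1 uv.2 * PU uv.1)) := fun y => by ring
      have hprod1 : (∏ i : Fin n, ∑ b : Y, if (i : ℕ) < j then W (x i) b else W' (x i) b) = 1 := by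
        apply Finset.prod_eq_one
        intro i _
        exact hrow _ (x i)
      rw [Finset.sum_congr rfl fun y _ => hre y, ← Finset.sum_mul,
        sum_pi_prod (fun (i : Fin n) (b : Y) => if (i : ℕ) < j then W (x i) b else W' (x i) b),
        hprod1, one_mul]
    rw [Finset.sum_congr rfl fun x _ => perx x, ← Finset.sum_mul, (hE uv.2).2, one_mul]
  have hDUV : (fun x : U × V => ∑ c, P (k+1) (x.1, x.2, c))
      = (fun x : U × V => ∑ c, P k (x.1, x.2, c)) := by
    rw [F1 (k+1), F1 k]
  have hDU : (fun a : U => ∑ b : V, ∑ c, P (k+1) (a, b, c))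
      = (fun a : U => ∑ b : V, ∑ c, P k (a, b, c)) := by
    funext u
    apply Finset.sum_congr rfl
    intro v _
    have h1 := congrFun (F1 (k+1)) (u, v)
    have h2 := congrFun (F1 k) (u, v)
    dsimp only at h1 h2
    rw [h1, h2]
  -- put everything together
  have hrepr : condMI (P (k+1)) - condMI (P k)
      = ((ent (fun t : U × (Fin n → Y) => ∑ b, P (k+1) (t.1, b, t.2))
          - ent (fun t : U × (Fin n → Y) => ∑ b, P k (t.1, b, t.2)))
        - (ent (P (k+1)) - ent (P k))) := by
    unfold condMI
    rw [hDUV, hDU]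
    ring
  rw [hrepr]
  have habs : ∀ A B : ℝ, |A - B| ≤ |A| + |B| := by
    intro A B
    calc |A - B| = |A + (-B)| := by rw [sub_eq_add_neg]
      _ ≤ |A| + |(-B)| := abs_add_le A (-B)
      _ = |A| + |B| := by rw [abs_neg]
  calc |(ent (fun t : U × (Fin n → Y) => ∑ b, P (k+1) (t.1, b, t.2))
          - ent (fun t : U × (Fin n → Y) => ∑ b, P k (t.1, b, t.2)))
        - (ent (P (k+1)) - ent (P k))| ≤ _ + _ := habs _ _
    _ ≤ C + C := add_le_add hUYdiff hPdiff
    _ = 4 * ε * M + 4 * H2 ε := by rw [hC]; ring
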